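/- Let G be a finite simple graph on n vertices. Then for every integer k ≥ 1, sdepth(J(G)^(k)) ≥ sdepth(J(G)^(k+1)); that is, the sequence {sdepth(J(G)^(k))}_{k=1}^∞ is non-increasing. -/

import Mathlib

open MvPolynomial

/-- The `k`-th symbolic power of the cover ideal of a graph `G`:
`J(G)^(k) = ⋂_{{x,y} ∈ E(G)} (x,y)^k`. -/
noncomputable def coverIdealSymbPow (K : Type*) [Field K] {V : Type*}
    (G : SimpleGraph V) (k : ℕ) : Ideal (MvPolynomial V K) :=
  ⨅ e : {p : V × V // G.Adj p.1 p.2}, (Ideal.span {X e.val.1, X e.val.2}) ^ k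

/-- The "Stanley set" of monomials `u·K[Z]`, recorded by exponent vectors:
all exponent vectors of the form `u + w` with `w` supported in `Z`. -/
def stanleyPiece {σ : Type*} (u : σ →₀ ℕ) (Z : Finset σ) : Set (σ →₀ ℕ) :=
  {v | u ≤ v ∧ ∀ i ∉ Z, v i = u i}

/-- A Stanley decomposition of a set of monomials (recorded by their exponent
vectors): a partition into finitely many Stanley sets `u_i·K[Z_i]`. -/
structure StanleyDecomp {σ : Type*} (A : Set (σ →₀ ℕ)) where
  m : ℕ
  u : Fin m → (σ →₀ ℕ)
  Z : Fin m → Finset σ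
  cover : A = ⋃ i, stanleyPiece (u i) (Z i)
  disj : ∀ i j, i ≠ j → Disjoint (stanleyPiece (u i) (Z i)) (stanleyPiece (u j) (Z j))

/-- Stanley depth of a set of monomials: the maximum over all Stanley
decompositions of the minimum `|Z_i|` (with value `⊤` on the empty set,
corresponding to the convention `sdepth 0 = ∞`). -/
noncomputable def sdepthSet {σ : Type*} (A : Set (σ →₀ ℕ)) : ℕ∞ :=
  ⨆ D : StanleyDecomp A, ⨅ i, ((D.Z i).card : ℕ∞)

/-- The set of (exponent vectors of) monomials belonging to an ideal. -/
def monomialSet {σ K : Type*} [CommSemiring K] (I : Ideal (MvPolynomial σ K)) :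
    Set (σ →₀ ℕ) :=
  {v | MvPolynomial.monomial v (1 : K) ∈ I}

/-- Stanley depth of a monomial ideal `I ⊆ S = K[x_1,…,x_n]`. -/
noncomputable def sdepthIdeal {σ K : Type*} [CommSemiring K]
    (I : Ideal (MvPolynomial σ K)) : ℕ∞ :=
  sdepthSet (monomialSet I)

/-- Stanley depth of the quotient `S/I` of the polynomial ring by a monomial ideal. -/
noncomputable def sdepthQuot {σ K : Type*} [CommSemiring K]
    (I : Ideal (MvPolynomial σ K)) : ℕ∞ :=
  sdepthSet (monomialSet I)ᶜ

namespace SdepthAux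

/-! ### Arithmetic: the "gap map" -/

/-- The gap map: identity below `c`, shift by one from `c` on. Its image misses `c`. -/
def gg (c s : ℕ) : ℕ := if s < c then s else s + 1

/-- A one-sided inverse of `gg`. -/
def ll (c m : ℕ) : ℕ := if m ≤ c then m else m - 1

lemma gg_zero {c : ℕ} (hc : 1 ≤ c) : gg c 0 = 0 := by unfold gg; split_ifs <;> omega

lemma ll_zero (c : ℕ) : ll c 0 = 0 := by unfold ll; simp

lemma gg_ge_iff (c s m : ℕ) : m ≤ gg c s ↔ ll c m ≤ s := by
  unfold gg ll; split_ifs <;> omega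

lemma gg_eq_iff (c s m : ℕ) : gg c s = m ↔ (m ≠ c ∧ s = ll c m) := by
  unfold gg ll; split_ifs <;> omega

lemma gg_ne (c s : ℕ) : gg c s ≠ c := by unfold gg; split_ifs <;> omega

lemma gg_key (c k s t : ℕ) (h1 : 2 * c ≤ k + 1) (h2 : k ≤ 2 * c) :
    k ≤ s + t ↔ k + 1 ≤ gg c s + gg c t := by
  unfold gg; split_ifs <;> omega

/-! ### The main combinatorial lemma: pulling back Stanley decompositions
along the coordinatewise gap map. -/

lemma sdepthSet_le_preimage {σ : Type*} (c : ℕ) (hc : 1 ≤ c) (A' : Set (σ →₀ ℕ)) :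
    sdepthSet A' ≤ sdepthSet (Finsupp.mapRange (gg c) (gg_zero hc) ⁻¹' A') := by
  classical
  refine iSup_le fun D => ?_
  set Φ : (σ →₀ ℕ) → (σ →₀ ℕ) := Finsupp.mapRange (gg c) (gg_zero hc) with hΦ
  set good : Fin D.m → Prop := fun i => ∀ j, j ∉ D.Z i → D.u i j ≠ c with hgood
  let e := Fintype.equivFin {i : Fin D.m // good i}
  have piece_iff : ∀ (i : Fin D.m), good i → ∀ x : σ →₀ ℕ,
      x ∈ stanleyPiece (Finsupp.mapRange (ll c) (ll_zero c) (D.u i)) (D.Z i) ↔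
        Φ x ∈ stanleyPiece (D.u i) (D.Z i) := by
    intro i hi x
    simp only [stanleyPiece, Set.mem_setOf_eq, Finsupp.le_def, Finsupp.mapRange_apply, hΦ]
    constructor
    · rintro ⟨hle, hfix⟩
      refine ⟨fun j => (gg_ge_iff c (x j) (D.u i j)).mpr (hle j), fun j hj => ?_⟩
      exact (gg_eq_iff c (x j) (D.u i j)).mpr ⟨hi j hj, hfix j hj⟩
    · rintro ⟨hle, hfix⟩
      refine ⟨fun j => (gg_ge_iff c (x j) (D.u i j)).mp (hle j), fun j hj => ?_⟩
      exact ((gg_eq_iff c (x j) (D.u i j)).mp (hfix j hj)).2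
  let D' : StanleyDecomp (Φ ⁻¹' A') :=
  { m := Fintype.card {i : Fin D.m // good i}
    u := fun i' => Finsupp.mapRange (ll c) (ll_zero c) (D.u (e.symm i').1)
    Z := fun i' => D.Z (e.symm i').1
    cover := by
      ext x
      simp only [Set.mem_preimage, D.cover, Set.mem_iUnion]
      constructor
      · rintro ⟨i, hx⟩
        have hgi : good i := by
          by_contra hng
          simp only [hgood, not_forall] at hng
          obtain ⟨j, hjZ, hjc⟩ := hng
          have h2 := hx.2 j hjZ
          rw [Finsupp.mapRange_apply] at h2
          rw [not_not] at hjc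
          exact gg_ne c (x j) (h2.trans hjc)
        refine ⟨e ⟨i, hgi⟩, ?_⟩
        have hs : e.symm (e ⟨i, hgi⟩) = ⟨i, hgi⟩ := e.symm_apply_apply _
        rw [hs]
        exact (piece_iff i hgi x).mpr hx
      · rintro ⟨i', hx⟩
        exact ⟨(e.symm i').1, (piece_iff _ (e.symm i').2 x).mp hx⟩
    disj := by
      intro i' j' hne
      have hij : (e.symm i').1 ≠ (e.symm j').1 := by
        intro h
        exact (e.symm.injective.ne hne) (Subtype.ext h)
      rw [Set.disjoint_left]
      intro x hxi hxj
      have h1 := (piece_iff _ (e.symm i').2 x).mp hxi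
      have h2 := (piece_iff _ (e.symm j').2 x).mp hxj
      exact Set.disjoint_left.mp (D.disj _ _ hij) h1 h2 }
  refine le_trans ?_
    (le_iSup (fun D'' : StanleyDecomp (Φ ⁻¹' A') => ⨅ i, ((D''.Z i).card : ℕ∞)) D')
  exact le_iInf fun i' => iInf_le _ ((e.symm i').1)

/-! ### Monomial membership in powers of edge ideals -/

variable {K : Type*} [Field K] {σ : Type*}

lemma span_pow_eq (a b : σ) (hab : a ≠ b) (m : ℕ) :
    (Ideal.span {X a, X b} : Ideal (MvPolynomial σ K)) ^ m
      = Ideal.span ((fun w => monomial w (1 : K)) '' {w : σ →₀ ℕ | m ≤ w a + w b}) := by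
  classical
  apply le_antisymm
  · induction m with
    | zero =>
      rw [pow_zero, Ideal.one_eq_top, top_le_iff, Ideal.eq_top_iff_one]
      have h1 : (1 : MvPolynomial σ K) = monomial 0 1 := by simp
      rw [h1]
      exact Ideal.subset_span ⟨0, by simp, rfl⟩
    | succ m ih =>
      rw [pow_succ]
      refine le_trans (Ideal.mul_mono_left ih) ?_
      rw [Ideal.span_mul_span']
      rw [Ideal.span_le]
      rintro f hf
      rw [Set.mem_mul] at hf
      obtain ⟨p, hp, q, hq, rfl⟩ := hf
      obtain ⟨w, hw, rfl⟩ := hp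
      rw [Set.mem_setOf_eq] at hw
      rw [Set.mem_insert_iff, Set.mem_singleton_iff] at hq
      have hX : ∀ (j : σ), (X j : MvPolynomial σ K) = monomial (Finsupp.single j 1) 1 := by
        intro j
        rw [← pow_one (X j : MvPolynomial σ K), X_pow_eq_monomial]
      rcases hq with rfl | rfl
      · rw [hX a, monomial_mul, one_mul]
        refine SetLike.mem_coe.mpr (Ideal.subset_span ⟨w + Finsupp.single a 1, ?_, rfl⟩)
        rw [Set.mem_setOf_eq, Finsupp.add_apply, Finsupp.add_apply,
          Finsupp.single_eq_same, Finsupp.single_eq_of_ne' hab]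
        omega
      · rw [hX b, monomial_mul, one_mul]
        refine SetLike.mem_coe.mpr (Ideal.subset_span ⟨w + Finsupp.single b 1, ?_, rfl⟩)
        rw [Set.mem_setOf_eq, Finsupp.add_apply, Finsupp.add_apply,
          Finsupp.single_eq_same, Finsupp.single_eq_of_ne' (Ne.symm hab)]
        omega
  · rw [Ideal.span_le]
    rintro f ⟨w, hw, rfl⟩
    rw [Set.mem_setOf_eq] at hw
    set p := min (w a) m with hp
    set q := m - p with hq
    have hpa : p ≤ w a := min_le_left _ _
    have hqb : q ≤ w b := by omega
    have hpq : p + q = m := by omega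
    have hle : Finsupp.single a p + Finsupp.single b q ≤ w := by
      rw [Finsupp.le_def]
      intro j
      rw [Finsupp.add_apply]
      rcases eq_or_ne j a with rfl | hja
      · rw [Finsupp.single_eq_same, Finsupp.single_eq_of_ne' (Ne.symm hab)]
        omega
      · rw [Finsupp.single_eq_of_ne' (Ne.symm hja)]
        rcases eq_or_ne j b with rfl | hjb
        · rw [Finsupp.single_eq_same]; omega
        · rw [Finsupp.single_eq_of_ne' (Ne.symm hjb)]; omega
    have hkey : monomial w (1:K)
        = (X a ^ p * X b ^ q) * monomial (w - (Finsupp.single a p + Finsupp.single b q)) 1 := by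
      rw [X_pow_eq_monomial, X_pow_eq_monomial, monomial_mul, monomial_mul,
        add_tsub_cancel_of_le hle]
      norm_num
    refine SetLike.mem_coe.mpr ?_
    show monomial w (1:K) ∈ _
    rw [hkey]
    refine Ideal.mul_mem_right _ _ ?_
    have hxa : (X a : MvPolynomial σ K) ∈ Ideal.span {X a, X b} :=
      Ideal.subset_span (Set.mem_insert _ _)
    have hxb : (X b : MvPolynomial σ K) ∈ Ideal.span {X a, X b} :=
      Ideal.subset_span (Set.mem_insert_of_mem _ rfl)
    have := Ideal.mul_mem_mul (Ideal.pow_mem_pow hxa p) (Ideal.pow_mem_pow hxb q)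
    rwa [← pow_add, hpq] at this

lemma monomial_mem_span_pow_iff (a b : σ) (hab : a ≠ b) (m : ℕ) (v : σ →₀ ℕ) :
    monomial v (1 : K) ∈ (Ideal.span {X a, X b} : Ideal (MvPolynomial σ K)) ^ m ↔
      m ≤ v a + v b := by
  classical
  rw [span_pow_eq a b hab m, mem_ideal_span_monomial_image]
  constructor
  · intro h
    obtain ⟨w, hw, hle⟩ := h v (by rw [support_monomial]; simp)
    rw [Set.mem_setOf_eq] at hw
    rw [Finsupp.le_def] at hle
    have := hle a; have := hle b; omega
  · intro h xi hxi
    rw [support_monomial, if_neg one_ne_zero, Finset.mem_singleton] at hxi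
    subst hxi
    exact ⟨xi, h, le_refl _⟩

/-- Membership characterization of the monomial set of `J(G)^(m)`. -/
lemma mem_monomialSet_symbPow_iff {V : Type*} (G : SimpleGraph V) (m : ℕ) (v : V →₀ ℕ) :
    v ∈ monomialSet (coverIdealSymbPow K G m) ↔
      ∀ e : {p : V × V // G.Adj p.1 p.2}, m ≤ v e.1.1 + v e.1.2 := by
  unfold monomialSet coverIdealSymbPow
  rw [Set.mem_setOf_eq, Submodule.mem_iInf]
  exact forall_congr' fun e => monomial_mem_span_pow_iff e.1.1 e.1.2 e.2.ne m v

end SdepthAux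

/-- For a finite simple graph `G` on `n` vertices and every
integer `k ≥ 1`, `sdepth(J(G)^(k)) ≥ sdepth(J(G)^(k+1))`: the sequence of
Stanley depths of the symbolic powers of the cover ideal is non-increasing. -/
theorem sdepth_ideal_symbPow_antitone (K : Type*) [Field K] (n : ℕ)
    (G : SimpleGraph (Fin n)) (k : ℕ) (hk : 1 ≤ k) :
    sdepthIdeal (coverIdealSymbPow K G (k + 1)) ≤
      sdepthIdeal (coverIdealSymbPow K G k) := by
  classical
  have hc : 1 ≤ (k + 1) / 2 := by omega
  set c := (k + 1) / 2 with hcdef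
  have h2c1 : 2 * c ≤ k + 1 := by omega
  have h2c2 : k ≤ 2 * c := by omega
  have hset : monomialSet (coverIdealSymbPow K G k)
      = Finsupp.mapRange (SdepthAux.gg c) (SdepthAux.gg_zero hc) ⁻¹'
          monomialSet (coverIdealSymbPow K G (k + 1)) := by
    ext v
    rw [Set.mem_preimage, SdepthAux.mem_monomialSet_symbPow_iff,
      SdepthAux.mem_monomialSet_symbPow_iff]
    refine forall_congr' fun e => ?_
    rw [Finsupp.mapRange_apply, Finsupp.mapRange_apply]
    exact SdepthAux.gg_key c k _ _ h2c1 h2c2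
  show sdepthSet _ ≤ sdepthSet _
  rw [hset]
  exact SdepthAux.sdepthSet_le_preimage c hc _
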